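/- Minimum distance of the generalized Reed–Muller code: if r ≤ q - 2 and F ∈ F_q[X_1, …, X_m] is a nonzero polynomial of total degree at most r, then F is nonzero at no fewer than (q - r)·q^{m-1} points of F_q^m (equivalently, F has at most r·q^{m-1} zeros in F_q^m); hence the (r,m) generalized Reed–Muller code over F_q has minimum Hamming distance at least d = (q - r)·q^{m-1}. -/

import Mathlib

open MvPolynomial Finset

/-- Schwartz–Zippel style zero count, stated multiplied by `q` to avoid `m - 1`. -/
lemma sz_mul (K : Type*) [Field K] [Fintype K] [DecidableEq K] :
    ∀ (m : ℕ) (F : MvPolynomial (Fin m) K), F ≠ 0 →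
      (Finset.univ.filter fun x : Fin m → K => eval x F = 0).card * Fintype.card K
        ≤ F.totalDegree * (Fintype.card K) ^ m := by
  intro m
  induction m with
  | zero =>
    intro F hF
    obtain ⟨a, rfl⟩ := MvPolynomial.C_surjective (Fin 0) F
    have ha : a ≠ 0 := fun h => hF (by simp [h])
    have : (Finset.univ.filter fun x : Fin 0 → K => eval x (C a) = 0) = ∅ := by
      rw [Finset.filter_eq_empty_iff]
      intro x _
      simpa using ha
    rw [this, Finset.card_empty, zero_mul]
    exact Nat.zero_le _
  | succ m IH =>
    intro F hF
    set q := Fintype.card K with hq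
    set φ := finSuccEquiv K m F with hφdef
    have hφ : φ ≠ 0 := fun h0 =>
      hF ((MvPolynomial.finSuccEquiv K m).injective (by rw [← hφdef, h0, map_zero]))
    set d := φ.natDegree with hd
    have hlc : φ.coeff d ≠ 0 := Polynomial.leadingCoeff_ne_zero.mpr hφ
    set t := (φ.coeff d).totalDegree with ht
    have htd : t + d ≤ F.totalDegree := totalDegree_coeff_finSuccEquiv_add_le F d hlc
    set s := (Finset.univ.filter fun x : Fin m → K => eval x (φ.coeff d) = 0).card with hs
    have hIH : s * q ≤ t * q ^ m := IH (φ.coeff d) hlc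
    -- reindex points as pairs
    have hcard :
        (Finset.univ.filter fun x : Fin (m+1) → K => eval x F = 0).card
          = (Finset.univ.filter fun p : K × (Fin m → K) =>
              eval (Fin.cons p.1 p.2 : Fin (m+1) → K) F = 0).card := by
      apply Finset.card_bij (fun x _ => (x 0, Fin.tail x))
      · intro x hx
        simp only [mem_filter, mem_univ, true_and] at hx ⊢
        rwa [Fin.cons_self_tail]
      · intro x hx y hy h
        simp only [Prod.mk.injEq] at h
        funext i
        refine Fin.cases ?_ ?_ i
        · exact h.1
        · intro j; exact congrFun h.2 j
      · intro p hp
        refine ⟨Fin.cons p.1 p.2, ?_, by simp⟩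
        simpa using hp
    -- sum over second coordinate
    have hsum :
        (Finset.univ.filter fun p : K × (Fin m → K) =>
            eval (Fin.cons p.1 p.2 : Fin (m+1) → K) F = 0).card
          = ∑ x : Fin m → K,
              (Finset.univ.filter fun a : K =>
                eval (Fin.cons a x : Fin (m+1) → K) F = 0).card := by
      simp only [Finset.card_filter]
      exact Fintype.sum_prod_type_right _
    -- bound each fiber
    have hfiber : ∀ x : Fin m → K,
        (Finset.univ.filter fun a : K =>
            eval (Fin.cons a x : Fin (m+1) → K) F = 0).card
          ≤ d + if eval x (φ.coeff d) = 0 then q else 0 := by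
      intro x
      by_cases h : eval x (φ.coeff d) = 0
      · rw [if_pos h]
        refine (Finset.card_filter_le _ _).trans ?_
        simp [hq]
      · rw [if_neg h, add_zero]
        set px := φ.map (MvPolynomial.eval x) with hpx
        have hpxne : px ≠ 0 := by
          intro h0
          apply h
          have := congrArg (fun p : Polynomial K => p.coeff d) h0
          simpa [hpx, Polynomial.coeff_map] using this
        have hsub : (Finset.univ.filter fun a : K =>
            eval (Fin.cons a x : Fin (m+1) → K) F = 0) ⊆ px.roots.toFinset := by
          intro a ha
          simp only [mem_filter, mem_univ, true_and] at ha
          rw [eval_eq_eval_mv_eval', ← hφdef, ← hpx] at ha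
          simp [Polynomial.mem_roots, hpxne, Polynomial.IsRoot, ha]
        calc (Finset.univ.filter fun a : K =>
                eval (Fin.cons a x : Fin (m+1) → K) F = 0).card
            ≤ px.roots.toFinset.card := Finset.card_le_card hsub
          _ ≤ Multiset.card px.roots := Multiset.toFinset_card_le _
          _ ≤ px.natDegree := Polynomial.card_roots' px
          _ ≤ d := Polynomial.natDegree_map_le
    have hsum2 : (∑ x : Fin m → K, (d + if eval x (φ.coeff d) = 0 then q else 0))
        = q ^ m * d + s * q := by
      rw [Finset.sum_add_distrib, Finset.sum_const, ← Finset.sum_filter,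
        Finset.sum_const, smul_eq_mul, smul_eq_mul, Finset.card_univ, Fintype.card_fun,
        Fintype.card_fin, ← hq, ← hs]
    rw [hcard, hsum]
    calc (∑ x : Fin m → K,
            (Finset.univ.filter fun a : K =>
              eval (Fin.cons a x : Fin (m+1) → K) F = 0).card) * q
        ≤ (q ^ m * d + s * q) * q := by
          refine Nat.mul_le_mul_right _ ?_
          rw [← hsum2]
          exact Finset.sum_le_sum fun x _ => hfiber x
      _ ≤ (q ^ m * d + t * q ^ m) * q := Nat.mul_le_mul_right _ (Nat.add_le_add_left hIH _)
      _ = (d + t) * (q ^ m * q) := by ring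
      _ ≤ F.totalDegree * (q ^ m * q) := Nat.mul_le_mul_right _ (by omega)
      _ = F.totalDegree * q ^ (m + 1) := by rw [pow_succ]

/-- Minimum distance of the generalized Reed–Muller code: a nonzero polynomial of total
degree at most `r ≤ q - 2` is nonzero at at least `(q - r) * q^(m-1)` points of `F_q^m`;
equivalently, the `(r, m)` generalized Reed–Muller code has minimum Hamming distance at
least `(q - r) * q^(m-1)`. -/
theorem grm_minimum_distance {F : Type*} [Field F] [Fintype F] {m : ℕ} (hm : 1 ≤ m)
    {r : ℕ} (hr : r ≤ Fintype.card F - 2)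
    (Fpoly : MvPolynomial (Fin m) F) (hF : Fpoly ≠ 0)
    (hdeg : Fpoly.totalDegree ≤ r) :
    (Fintype.card F - r) * (Fintype.card F) ^ (m - 1) ≤
      {P : Fin m → F | MvPolynomial.eval P Fpoly ≠ 0}.ncard := by
  classical
  set q := Fintype.card F with hq
  have hq2 : 2 ≤ q := Fintype.one_lt_card
  have hqpos : 0 < q := by omega
  set Z := (Finset.univ.filter fun x : Fin m → F => eval x Fpoly = 0) with hZ
  set N := (Finset.univ.filter fun x : Fin m → F => ¬ eval x Fpoly = 0) with hN
  have hNZ : Z.card + N.card = q ^ m := by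
    rw [hZ, hN, Finset.card_filter_add_card_filter_not]
    simp [hq, Fintype.card_fun]
  have hzero : Z.card * q ≤ Fpoly.totalDegree * q ^ m := sz_mul F m Fpoly hF
  have hzero' : Z.card * q ≤ r * q ^ m :=
    hzero.trans (Nat.mul_le_mul_right _ hdeg)
  -- convert ncard
  have hset : {P : Fin m → F | MvPolynomial.eval P Fpoly ≠ 0} = ↑N := by
    ext x; simp [hN]
  rw [hset, Set.ncard_coe_finset]
  -- arithmetic: (q - r) * q^(m-1) ≤ N.card
  obtain ⟨m', rfl⟩ : ∃ m', m = m' + 1 := ⟨m - 1, by omega⟩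
  simp only [Nat.add_sub_cancel]
  have hpow : q ^ (m' + 1) = q * q ^ m' := by ring
  have hz : Z.card ≤ r * q ^ m' := by
    have : Z.card * q ≤ r * q ^ m' * q := by
      calc Z.card * q ≤ r * q ^ (m' + 1) := hzero'
        _ = r * q ^ m' * q := by ring
    exact Nat.le_of_mul_le_mul_right this hqpos
  have : (q - r) * q ^ m' = q * q ^ m' - r * q ^ m' := Nat.sub_mul q r _
  omega
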